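/- Fix d ≥ 1. For measurable symmetric functions W₁, W₂ : [0,1]^{d+1} → [0,1], the supremum over pairwise disjoint Borel sets S₁,...,S_{d+1} ⊆ [0,1] of |∫_{S₁×···×S_{d+1}} (W₁(x) − W₂(x)) dx| is at least (d+1)^{−(d+1)} times the cut-norm distance d_{□,d}(W₁,W₂) = sup over arbitrary Borel sets S₁,...,S_{d+1} of |∫_{S₁×···×S_{d+1}} (W₁(x) − W₂(x)) dx|. -/

import Mathlib

open MeasureTheory

noncomputable section

/-- The uniform (Lebesgue) measure on `[0,1]`. -/
def unifI : Measure ℝ := volume.restrict (Set.Icc (0:ℝ) 1)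

/-- The product uniform measure on tuples indexed by `ι`. -/
def piUnif (ι : Type*) [Fintype ι] : Measure (ι → ℝ) := Measure.pi fun _ => unifI

/-- A complexon, encoded as a function on finite multisets of points of `[0,1]`
(the multiset encoding makes total symmetry automatic), with values in `[0,1]`,
equal to `1` on the empty multiset and on singletons, and measurable in each
dimension. -/
structure Complexon where
  toFun : Multiset ℝ → ℝ
  mem_Icc : ∀ m, toFun m ∈ Set.Icc (0:ℝ) 1
  empty_eq_one : toFun 0 = 1
  single_eq_one : ∀ x : ℝ, toFun {x} = 1
  measurable : ∀ d : ℕ, Measurable fun v : Fin (d+1) → ℝ =>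
    toFun (Multiset.map v Finset.univ.val)

/-- The multiset of coordinates of a tuple. -/
def mTup {ι : Type*} [Fintype ι] (v : ι → ℝ) : Multiset ℝ :=
  Multiset.map v Finset.univ.val

/-- The faceted version `Ŵ` of a complexon-like function:
`Ŵ(x₁,…,x_{d+1}) = ∏_{∅ ≠ σ ⊆ [d+1]} W(x_σ)`. -/
def facetFun (W : Multiset ℝ → ℝ) : Multiset ℝ → ℝ :=
  fun m => ((m.powerset.filter (· ≠ 0)).map W).prod

/-- An abstract simplicial complex on a vertex type `V`: a finite family of
finite nonempty subsets of `V` closed under taking nonempty subsets. -/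
structure SComplex (V : Type*) [DecidableEq V] where
  faces : Finset (Finset V)
  nonempty_mem : ∀ σ ∈ faces, σ.Nonempty
  down_closed : ∀ σ ∈ faces, ∀ τ ⊆ σ, τ.Nonempty → τ ∈ faces

variable {V : Type*} [DecidableEq V] [Fintype V]

/-- Facets: the inclusion-maximal faces. -/
def SComplex.facets (F : SComplex V) : Finset (Finset V) :=
  F.faces.filter fun σ => ∀ τ ∈ F.faces, σ ⊆ τ → σ = τ

/-- Antifacets: the inclusion-minimal nonempty non-faces. -/
def SComplex.antifacets (F : SComplex V) : Finset (Finset V) :=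
  Finset.univ.filter fun τ =>
    τ.Nonempty ∧ τ ∉ F.faces ∧ ∀ τ' ⊂ τ, τ'.Nonempty → τ' ∈ F.faces

/-- Homomorphism-density-type integral of a family of faces in a
multiset function. -/
def homDensityOn (A : Finset (Finset V)) (W : Multiset ℝ → ℝ) : ℝ :=
  ∫ x : V → ℝ, ∏ σ ∈ A, W (σ.val.map x) ∂(piUnif V)

/-- Homomorphism density `t(F, W)`. -/
def homDensity (F : SComplex V) (W : Multiset ℝ → ℝ) : ℝ := homDensityOn F.faces W

/-- Induced homomorphism density `t_ind(F, W)`. -/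
def indDensity (F : SComplex V) (W : Multiset ℝ → ℝ) : ℝ :=
  ∫ x : V → ℝ,
    (∏ σ ∈ F.faces, W (σ.val.map x)) *
    (∏ τ ∈ F.antifacets, (1 - W (τ.val.map x))) ∂(piUnif V)

/-- `d`-dimensional cut norm of a function on `(d+1)`-tuples. -/
def cutNormD (d : ℕ) (U : (Fin (d+1) → ℝ) → ℝ) : ℝ :=
  sSup { r | ∃ S : Fin (d+1) → Set ℝ, (∀ i, MeasurableSet (S i)) ∧
    r = |∫ x in Set.univ.pi S, U x ∂(piUnif (Fin (d+1)))| }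

/-- `d`-dimensional cut distance between two multiset functions. -/
def cutDistD (d : ℕ) (W₁ W₂ : Multiset ℝ → ℝ) : ℝ :=
  cutNormD d (fun v => W₁ (mTup v) - W₂ (mTup v))

/-- Labeled cut distance with weights `α` (`α j` weights dimension `j`, `j ≥ 1`). -/
def cutDist (α : ℕ → ℝ) (W₁ W₂ : Multiset ℝ → ℝ) : ℝ :=
  ∑' j : ℕ, α (j+1) * cutDistD (j+1) W₁ W₂

/-- Composition of a multiset function with a point transformation `φ`. -/
def compFun (W : Multiset ℝ → ℝ) (φ : ℝ → ℝ) : Multiset ℝ → ℝ :=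
  fun m => W (m.map φ)

/-- Unlabeled cut distance `δ_□(·,·;(α_j))`: infimum over measure-preserving
transformations of `[0,1]`. -/
def uCutDist (α : ℕ → ℝ) (W₁ W₂ : Multiset ℝ → ℝ) : ℝ :=
  sInf { r | ∃ φ : ℝ → ℝ, MeasurePreserving φ unifI unifI ∧
    r = cutDist α W₁ (compFun W₂ φ) }


section AuxDisjoint
open Finset
open scoped ENNReal

instance : IsProbabilityMeasure unifI :=
  ⟨by rw [unifI, Measure.restrict_apply_univ, Real.volume_Icc]; norm_num⟩

instance piUnif.prob (ι : Type*) [Fintype ι] : IsProbabilityMeasure (piUnif ι) := by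
  rw [piUnif]; infer_instance

def cellF (N : ℕ) (x : ℝ) : Fin (N+1) :=
  ⟨min (⌊x * N⌋).toNat N, Nat.lt_succ_of_le (min_le_right _ _)⟩

lemma measurable_cellF (N : ℕ) : Measurable (cellF N) := by
  have h1 : Measurable fun x : ℝ => ⌊x * (N:ℝ)⌋ :=
    Int.measurable_floor.comp (measurable_id.mul_const _)
  have h2 : Measurable fun k : ℤ => (⟨min k.toNat N, Nat.lt_succ_of_le (min_le_right _ _)⟩ : Fin (N+1)) :=
    measurable_from_top
  exact h2.comp h1

lemma cellF_measure (N : ℕ) (hN : 1 ≤ N) (k : Fin (N+1)) :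
    unifI ((cellF N) ⁻¹' {k}) ≤ ENNReal.ofReal (1 / N) := by
  have hN0 : (0:ℝ) < N := by exact_mod_cast hN
  have hsub : (cellF N) ⁻¹' {k} ∩ Set.Icc 0 1 ⊆ Set.Icc ((k:ℝ)/N) (((k:ℝ)+1)/N) := by
    rintro x ⟨hk, hx0, hx1⟩
    have hy0 : (0:ℝ) ≤ x * N := mul_nonneg hx0 hN0.le
    have hfl : (⌊x * (N:ℝ)⌋).toNat ≤ N := by
      have : (⌊x * (N:ℝ)⌋ : ℝ) ≤ N := le_trans (Int.floor_le _) (by nlinarith)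
      exact Int.toNat_le.mpr (by exact_mod_cast this)
    have hkv : (k : ℕ) = (⌊x * (N:ℝ)⌋).toNat := by
      have : cellF N x = k := hk
      rw [cellF] at this
      have := congrArg Fin.val this
      simpa [min_eq_left hfl] using this.symm
    have hfl0 : (0:ℤ) ≤ ⌊x * (N:ℝ)⌋ := Int.floor_nonneg.mpr hy0
    have hcast : ((k:ℕ) : ℝ) = ((⌊x * (N:ℝ)⌋ : ℤ) : ℝ) := by
      rw [hkv]; exact_mod_cast Int.toNat_of_nonneg hfl0
    constructor
    · rw [div_le_iff₀ hN0, hcast]; exact Int.floor_le _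
    · rw [le_div_iff₀ hN0, hcast]
      have := Int.lt_floor_add_one (x * (N:ℝ))
      push_cast at this ⊢
      linarith
  calc unifI ((cellF N) ⁻¹' {k}) = volume ((cellF N) ⁻¹' {k} ∩ Set.Icc 0 1) := by
        rw [unifI, Measure.restrict_apply ((measurable_cellF N) (MeasurableSet.singleton k))]
    _ ≤ volume (Set.Icc ((k:ℝ)/N) (((k:ℝ)+1)/N)) := measure_mono hsub
    _ = ENNReal.ofReal (1/N) := by
        rw [Real.volume_Icc]; congr 1; field_simp; ring

lemma pair_measure {d : ℕ} (i j : Fin (d+1)) (hij : i ≠ j) (A B : Set ℝ)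
    (hA : MeasurableSet A) (hB : MeasurableSet B) :
    piUnif (Fin (d+1)) {x | x i ∈ A ∧ x j ∈ B} = unifI A * unifI B := by
  classical
  set T : Fin (d+1) → Set ℝ := fun l => if l = i then A else if l = j then B else Set.univ with hT
  have hset : {x : Fin (d+1) → ℝ | x i ∈ A ∧ x j ∈ B} = Set.univ.pi T := by
    ext x
    simp only [Set.mem_setOf_eq, Set.mem_univ_pi, hT]
    constructor
    · rintro ⟨h1, h2⟩ l
      by_cases hli : l = i
      · subst hli; simpa using h1
      · by_cases hlj : l = j
        · subst hlj; simp [hli, h2]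
        · simp [hli, hlj]
    · intro h
      refine ⟨by simpa using h i, ?_⟩
      have := h j
      simpa [Ne.symm hij] using this
  rw [hset, piUnif, Measure.pi_pi]
  have hrw : ∀ l : Fin (d+1), unifI (T l) = if l = i then unifI A else if l = j then unifI B else 1 := by
    intro l
    by_cases hli : l = i
    · simp [hT, hli]
    · by_cases hlj : l = j
      · subst hlj
        simp only [hT, if_neg hli, if_pos rfl, if_neg (Ne.symm hij)]
        simp
      · simp [hT, hli, hlj]
  calc ∏ l, unifI (T l) = ∏ l, (if l = i then unifI A else if l = j then unifI B else 1) :=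
        Finset.prod_congr rfl fun l _ => hrw l
    _ = ∏ l ∈ ({i, j} : Finset (Fin (d+1))), (if l = i then unifI A else if l = j then unifI B else 1) := by
        refine (Finset.prod_subset (Finset.subset_univ _) fun l _ hl => ?_).symm
        simp only [Finset.mem_insert, Finset.mem_singleton, not_or] at hl
        simp [hl.1, hl.2]
    _ = unifI A * unifI B := by
        rw [Finset.prod_pair hij]
        simp [Ne.symm hij]

/-- helper: integrable if bounded measurable on finite measure -/
lemma integrable_bdd {α : Type*} [MeasurableSpace α] (μ : Measure α) [IsFiniteMeasure μ]
    (f : α → ℝ) (hf : Measurable f) (C : ℝ) (h : ∀ x, |f x| ≤ C) : Integrable f μ :=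
  Integrable.mono' (integrable_const C) hf.aestronglyMeasurable
    (Filter.Eventually.of_forall fun x => by simpa [Real.norm_eq_abs] using h x)

lemma indicator_inter_one (A B : Set ℝ) (y : ℝ) :
    (A ∩ B).indicator (fun _ => (1:ℝ)) y
      = A.indicator (fun _ => (1:ℝ)) y * B.indicator (fun _ => (1:ℝ)) y := by
  classical
  by_cases hA : y ∈ A <;> by_cases hB : y ∈ B <;>
    simp [Set.indicator_apply, hA, hB]

lemma setIntegral_pi_eq {d : ℕ} (T : Fin (d+1) → Set ℝ) (hT : ∀ i, MeasurableSet (T i))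
    (U : (Fin (d+1) → ℝ) → ℝ) :
    ∫ x in Set.univ.pi T, U x ∂(piUnif (Fin (d+1)))
      = ∫ x, (∏ i, (T i).indicator (fun _ => (1:ℝ)) (x i)) * U x ∂(piUnif (Fin (d+1))) := by
  rw [← integral_indicator (MeasurableSet.univ_pi fun i => hT i)]
  congr 1
  funext x
  by_cases hx : x ∈ Set.univ.pi T
  · rw [Set.indicator_of_mem hx]
    have : ∀ i : Fin (d+1), (T i).indicator (fun _ => (1:ℝ)) (x i) = 1 := fun i =>
      Set.indicator_of_mem (hx i (Set.mem_univ i)) _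
    rw [Finset.prod_congr rfl fun i _ => this i, Finset.prod_const_one, one_mul]
  · rw [Set.indicator_of_notMem hx]
    rw [Set.mem_univ_pi] at hx
    push_neg at hx
    obtain ⟨i, hi⟩ := hx
    rw [Finset.prod_eq_zero (Finset.mem_univ i) (Set.indicator_of_notMem hi _), zero_mul]

def badSet (d N : ℕ) : Set (Fin (d+1) → ℝ) :=
  {x | ¬ Function.Injective fun i => cellF N (x i)}

lemma badSet_eq (d N : ℕ) : badSet d N =
    ⋃ (i : Fin (d+1)) (j : Fin (d+1)) (_ : i ≠ j) (k : Fin (N+1)),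
      {x : Fin (d+1) → ℝ | x i ∈ cellF N ⁻¹' {k} ∧ x j ∈ cellF N ⁻¹' {k}} := by
  ext x
  simp only [badSet, Set.mem_setOf_eq, Set.mem_iUnion, Set.mem_preimage,
    Set.mem_singleton_iff, Function.Injective]
  constructor
  · intro h
    push_neg at h
    obtain ⟨i, j, hij, hne⟩ := h
    exact ⟨i, j, hne, cellF N (x i), rfl, hij.symm⟩
  · rintro ⟨i, j, hne, k, h1, h2⟩ h
    exact hne (h (h1.trans h2.symm))

lemma badSet_measurable (d N : ℕ) : MeasurableSet (badSet d N) := by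
  rw [badSet_eq]
  refine MeasurableSet.iUnion fun i => MeasurableSet.iUnion fun j =>
    MeasurableSet.iUnion fun _ => MeasurableSet.iUnion fun k => ?_
  exact (((measurable_cellF N).comp (measurable_pi_apply i)) (MeasurableSet.singleton k)).inter
    (((measurable_cellF N).comp (measurable_pi_apply j)) (MeasurableSet.singleton k))

lemma badSet_measure (d N : ℕ) (hN : 1 ≤ N) :
    piUnif (Fin (d+1)) (badSet d N)
      ≤ ENNReal.ofReal ((((d:ℝ)+1)^2 * ((N:ℝ)+1)) / (N:ℝ)^2) := by
  classical
  have hcell : ∀ k : Fin (N+1), unifI ((cellF N) ⁻¹' {k}) ≤ ENNReal.ofReal (1 / N) :=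
    cellF_measure N hN
  have hpair : ∀ (i j : Fin (d+1)), i ≠ j →
      piUnif (Fin (d+1)) (⋃ k : Fin (N+1),
        {x : Fin (d+1) → ℝ | x i ∈ cellF N ⁻¹' {k} ∧ x j ∈ cellF N ⁻¹' {k}})
      ≤ ((N:ℝ≥0∞)+1) * (ENNReal.ofReal (1/N) * ENNReal.ofReal (1/N)) := by
    intro i j hij
    calc piUnif (Fin (d+1)) (⋃ k : Fin (N+1), _)
        ≤ ∑ k : Fin (N+1), piUnif (Fin (d+1))
            {x : Fin (d+1) → ℝ | x i ∈ cellF N ⁻¹' {k} ∧ x j ∈ cellF N ⁻¹' {k}} :=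
          measure_iUnion_fintype_le _ _
      _ ≤ ∑ _k : Fin (N+1), ENNReal.ofReal (1/N) * ENNReal.ofReal (1/N) := by
          refine Finset.sum_le_sum fun k _ => ?_
          rw [pair_measure i j hij _ _ ((measurable_cellF N) (MeasurableSet.singleton k))
            ((measurable_cellF N) (MeasurableSet.singleton k))]
          exact mul_le_mul' (hcell k) (hcell k)
      _ = ((N:ℝ≥0∞)+1) * (ENNReal.ofReal (1/N) * ENNReal.ofReal (1/N)) := by
          rw [Finset.sum_const, Finset.card_univ, Fintype.card_fin, nsmul_eq_mul]
          push_cast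
          ring
  have hmain : piUnif (Fin (d+1)) (badSet d N)
      ≤ (((d:ℝ≥0∞)+1) * ((d:ℝ≥0∞)+1)) * (((N:ℝ≥0∞)+1) * (ENNReal.ofReal (1/N) * ENNReal.ofReal (1/N))) := by
    rw [badSet_eq]
    calc piUnif (Fin (d+1)) _
        ≤ ∑ i : Fin (d+1), piUnif (Fin (d+1)) (⋃ (j : Fin (d+1)) (_ : i ≠ j) (k : Fin (N+1)),
            {x : Fin (d+1) → ℝ | x i ∈ cellF N ⁻¹' {k} ∧ x j ∈ cellF N ⁻¹' {k}}) :=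
          measure_iUnion_fintype_le _ _
      _ ≤ ∑ _i : Fin (d+1), ∑ _j : Fin (d+1),
            (((N:ℝ≥0∞)+1) * (ENNReal.ofReal (1/N) * ENNReal.ofReal (1/N))) := by
          refine Finset.sum_le_sum fun i _ => ?_
          calc piUnif (Fin (d+1)) _
              ≤ ∑ j : Fin (d+1), piUnif (Fin (d+1)) (⋃ (_ : i ≠ j) (k : Fin (N+1)),
                  {x : Fin (d+1) → ℝ | x i ∈ cellF N ⁻¹' {k} ∧ x j ∈ cellF N ⁻¹' {k}}) :=
                measure_iUnion_fintype_le _ _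
            _ ≤ _ := by
                refine Finset.sum_le_sum fun j _ => ?_
                by_cases hij : i = j
                · subst hij
                  simp
                · refine le_trans (measure_mono ?_) (hpair i j hij)
                  exact Set.iUnion_subset fun _ => subset_rfl
      _ = (((d:ℝ≥0∞)+1) * ((d:ℝ≥0∞)+1)) * (((N:ℝ≥0∞)+1) * (ENNReal.ofReal (1/N) * ENNReal.ofReal (1/N))) := by
          rw [Finset.sum_const, Finset.sum_const, Finset.card_univ, Fintype.card_fin,
            nsmul_eq_mul, nsmul_eq_mul]
          push_cast
          ring
  refine le_trans hmain (le_of_eq ?_)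
  have hN0 : (0:ℝ) < N := by exact_mod_cast hN
  rw [show ((d:ℝ≥0∞)+1) = ENNReal.ofReal ((d:ℝ)+1) by
        rw [ENNReal.ofReal_add (by positivity) zero_le_one]; simp,
      show ((N:ℝ≥0∞)+1) = ENNReal.ofReal ((N:ℝ)+1) by
        rw [ENNReal.ofReal_add (by positivity) zero_le_one]; simp]
  rw [← ENNReal.ofReal_mul (by positivity), ← ENNReal.ofReal_mul (by positivity),
    ← ENNReal.ofReal_mul (by positivity), ← ENNReal.ofReal_mul (by positivity)]
  congr 1
  field_simp

lemma countLemma (a b : ℕ) [NeZero a] (g : Fin a → Fin b) :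
    ∑ ω : Fin b → Fin a, ∏ i : Fin a, (if ω (g i) = i then (1:ℝ) else 0)
      = if Function.Injective g then (a:ℝ)^(b - a) else 0 := by
  classical
  by_cases hg : Function.Injective g
  · simp only [hg, if_true]
    have hinv : ∀ i, Function.invFun g (g i) = i := fun i => Function.leftInverse_invFun hg i
    set f : Fin b → Fin a → ℝ := fun c j =>
      if c ∈ Finset.image g Finset.univ then (if j = Function.invFun g c then 1 else 0) else 1
      with hf
    have h1 : ∀ ω : Fin b → Fin a,
        (∏ i : Fin a, (if ω (g i) = i then (1:ℝ) else 0)) = ∏ c : Fin b, f c (ω c) := by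
      intro ω
      rw [← Finset.prod_subset (Finset.subset_univ (Finset.image g Finset.univ))
        (fun c _ hc => by rw [hf]; simp only [if_neg hc])]
      rw [Finset.prod_image (fun i _ j _ h => hg h)]
      refine Finset.prod_congr rfl fun i _ => ?_
      rw [hf]
      simp only []
      rw [if_pos (Finset.mem_image_of_mem g (Finset.mem_univ i)), hinv i]
    have h2 : (∑ ω : Fin b → Fin a, ∏ c : Fin b, f c (ω c))
        = ∏ c : Fin b, ∑ j : Fin a, f c j := by
      rw [Finset.prod_univ_sum, Fintype.piFinset_univ]
    have h3 : ∀ c : Fin b, (∑ j : Fin a, f c j)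
        = if c ∈ Finset.image g Finset.univ then 1 else (a:ℝ) := by
      intro c
      by_cases hc : c ∈ Finset.image g Finset.univ
      · rw [if_pos hc]
        rw [hf]
        simp only [if_pos hc]
        rw [Finset.sum_ite_eq' Finset.univ (Function.invFun g c) (fun _ => (1:ℝ))]
        rw [if_pos (Finset.mem_univ _)]
      · rw [if_neg hc, hf]
        simp only [if_neg hc]
        rw [Finset.sum_const, Finset.card_univ, Fintype.card_fin, nsmul_eq_mul, mul_one]
    have h4 : (∏ c : Fin b, if c ∈ Finset.image g Finset.univ then (1:ℝ) else (a:ℝ))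
        = (a:ℝ)^(b - a) := by
      rw [Finset.prod_ite, Finset.prod_const_one, one_mul, Finset.prod_const]
      congr 1
      have : Finset.univ.filter (fun c => c ∉ Finset.image g Finset.univ)
          = (Finset.image g Finset.univ)ᶜ := by
        ext c; simp
      rw [this, Finset.card_compl, Finset.card_image_of_injective _ hg,
        Finset.card_univ, Fintype.card_fin, Fintype.card_fin]
    calc ∑ ω : Fin b → Fin a, ∏ i : Fin a, (if ω (g i) = i then (1:ℝ) else 0)
        = ∑ ω : Fin b → Fin a, ∏ c : Fin b, f c (ω c) := Finset.sum_congr rfl fun ω _ => h1 ω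
      _ = ∏ c : Fin b, ∑ j : Fin a, f c j := h2
      _ = ∏ c : Fin b, if c ∈ Finset.image g Finset.univ then (1:ℝ) else (a:ℝ) :=
          Finset.prod_congr rfl fun c _ => h3 c
      _ = (a:ℝ)^(b - a) := h4
  · simp only [hg, if_false]
    rw [Function.not_injective_iff] at hg
    obtain ⟨i, j, hgij, hij⟩ := hg
    refine Finset.sum_eq_zero fun ω _ => ?_
    by_cases hωi : ω (g i) = i
    · refine Finset.prod_eq_zero (Finset.mem_univ j) ?_
      rw [if_neg (by rw [← hgij, hωi]; exact hij)]
    · exact Finset.prod_eq_zero (Finset.mem_univ i) (if_neg hωi)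

lemma key (d N : ℕ) (hdN : d + 1 ≤ N)
    (U : (Fin (d+1) → ℝ) → ℝ) (hU : Measurable U) (hUb : ∀ x, |U x| ≤ 1)
    (S : Fin (d+1) → Set ℝ) (hS : ∀ i, MeasurableSet (S i)) (M : ℝ)
    (hM : ∀ ω : Fin (N+1) → Fin (d+1),
      |∫ x in Set.univ.pi (fun i => S i ∩ (fun y => ω (cellF N y)) ⁻¹' {i}), U x
        ∂(piUnif (Fin (d+1)))| ≤ M) :
    |∫ x in Set.univ.pi S, U x ∂(piUnif (Fin (d+1)))|
      ≤ ((d:ℝ)+1)^(d+1) * M + (piUnif (Fin (d+1)) (badSet d N)).toReal := by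
  classical
  set μ := piUnif (Fin (d+1)) with hμ
  set c : ℝ := (d:ℝ)+1 with hc
  have hc0 : (0:ℝ) < c := by rw [hc]; positivity
  set P : (Fin (d+1) → ℝ) → ℝ := fun x => ∏ i, (S i).indicator (fun _ => (1:ℝ)) (x i) with hP
  set Dind : (Fin (d+1) → ℝ) → ℝ :=
    fun x => if Function.Injective (fun i => cellF N (x i)) then (1:ℝ) else 0 with hDind
  have hind01 : ∀ (A : Set ℝ) (y : ℝ),
      0 ≤ A.indicator (fun _ => (1:ℝ)) y ∧ A.indicator (fun _ => (1:ℝ)) y ≤ 1 := by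
    intro A y; by_cases h : y ∈ A <;> simp [Set.indicator_apply, h]
  have hprod01 : ∀ (T : Fin (d+1) → Set ℝ) (x : Fin (d+1) → ℝ),
      0 ≤ (∏ i, (T i).indicator (fun _ => (1:ℝ)) (x i)) ∧
      (∏ i, (T i).indicator (fun _ => (1:ℝ)) (x i)) ≤ 1 := by
    intro T x
    constructor
    · exact Finset.prod_nonneg fun i _ => (hind01 _ _).1
    · exact Finset.prod_le_one (fun i _ => (hind01 _ _).1) (fun i _ => (hind01 _ _).2)
  have hindmeas : ∀ (A : Set ℝ), MeasurableSet A → ∀ i : Fin (d+1),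
      Measurable fun x : Fin (d+1) → ℝ => A.indicator (fun _ => (1:ℝ)) (x i) := by
    intro A hA i
    exact (measurable_const.indicator hA).comp (measurable_pi_apply i)
  have hωmeas : ∀ (ω : Fin (N+1) → Fin (d+1)) (i : Fin (d+1)),
      MeasurableSet (S i ∩ (fun y => ω (cellF N y)) ⁻¹' {i}) := by
    intro ω i
    exact (hS i).inter
      (((measurable_from_top (f := ω)).comp (measurable_cellF N)) (MeasurableSet.singleton i))
  -- per-ω representation
  have hA : ∀ ω : Fin (N+1) → Fin (d+1),
      ∫ x in Set.univ.pi (fun i => S i ∩ (fun y => ω (cellF N y)) ⁻¹' {i}), U x ∂μ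
        = ∫ x, (∏ i, ((S i ∩ (fun y => ω (cellF N y)) ⁻¹' {i}).indicator
            (fun _ => (1:ℝ)) (x i))) * U x ∂μ :=
    fun ω => setIntegral_pi_eq _ (hωmeas ω) U
  -- integrability of each integrand
  have hFmeas : ∀ ω : Fin (N+1) → Fin (d+1),
      Measurable fun x => (∏ i, ((S i ∩ (fun y => ω (cellF N y)) ⁻¹' {i}).indicator
          (fun _ => (1:ℝ)) (x i))) * U x := by
    intro ω
    exact (Finset.measurable_prod _ fun i _ => hindmeas _ (hωmeas ω i) i).mul hU
  have hFbd : ∀ (ω : Fin (N+1) → Fin (d+1)) (x : Fin (d+1) → ℝ),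
      |(∏ i, ((S i ∩ (fun y => ω (cellF N y)) ⁻¹' {i}).indicator (fun _ => (1:ℝ)) (x i))) * U x|
        ≤ 1 := by
    intro ω x
    rw [abs_mul]
    have h1 := hprod01 (fun i => S i ∩ (fun y => ω (cellF N y)) ⁻¹' {i}) x
    calc |∏ i, _| * |U x| ≤ 1 * 1 := by
          refine mul_le_mul ?_ (hUb x) (abs_nonneg _) zero_le_one
          rw [abs_of_nonneg h1.1]; exact h1.2
      _ = 1 := mul_one 1
  -- pointwise sum identity
  have hpoint : ∀ x : Fin (d+1) → ℝ,
      (∑ ω : Fin (N+1) → Fin (d+1), ∏ i, ((S i ∩ (fun y => ω (cellF N y)) ⁻¹' {i}).indicator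
          (fun _ => (1:ℝ)) (x i)))
        = c^(N-d) * (Dind x * P x) := by
    intro x
    have h1 : ∀ ω : Fin (N+1) → Fin (d+1),
        (∏ i, ((S i ∩ (fun y => ω (cellF N y)) ⁻¹' {i}).indicator (fun _ => (1:ℝ)) (x i)))
          = P x * ∏ i, (if ω (cellF N (x i)) = i then (1:ℝ) else 0) := by
      intro ω
      rw [hP, ← Finset.prod_mul_distrib]
      refine Finset.prod_congr rfl fun i _ => ?_
      rw [indicator_inter_one]
      congr 1
      by_cases h : ω (cellF N (x i)) = i
      · simp [Set.indicator_apply, h]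
      · simp [Set.indicator_apply, h]
    rw [Finset.sum_congr rfl fun ω _ => h1 ω, ← Finset.mul_sum]
    rw [countLemma (d+1) (N+1) (fun i => cellF N (x i))]
    by_cases h : Function.Injective (fun i => cellF N (x i))
    · have hD1 : Dind x = 1 := by simp only [hDind]; rw [if_pos h]
      rw [if_pos h, hD1]
      have hcast : ((d+1:ℕ):ℝ) = c := by rw [hc]; push_cast; ring
      rw [Nat.succ_sub_succ, hcast]
      ring
    · have hD0 : Dind x = 0 := by simp only [hDind]; rw [if_neg h]
      rw [if_neg h, hD0]
      ring
  -- K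
  set K : ℝ := ∫ x, Dind x * (P x * U x) ∂μ with hK
  have hDmeas : Measurable Dind := by
    have : Dind = (badSet d N)ᶜ.indicator (fun _ => (1:ℝ)) := by
      funext x
      by_cases h : Function.Injective (fun i => cellF N (x i))
      · rw [hDind]
        simp only [if_pos h]
        rw [Set.indicator_of_mem]
        simp [badSet, h]
      · rw [hDind]
        simp only [if_neg h]
        rw [Set.indicator_of_notMem]
        simp [badSet, h]
    rw [this]
    exact measurable_const.indicator (badSet_measurable d N).compl
  have hPmeas : Measurable P := Finset.measurable_prod _ fun i _ => hindmeas _ (hS i) i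
  have hPU_bd : ∀ x, |P x * U x| ≤ 1 := by
    intro x
    rw [abs_mul]
    have h1 := hprod01 S x
    calc |P x| * |U x| ≤ 1 * 1 := by
          refine mul_le_mul ?_ (hUb x) (abs_nonneg _) zero_le_one
          rw [hP, abs_of_nonneg h1.1]; exact h1.2
      _ = 1 := mul_one 1
  have hPU_int : Integrable (fun x => P x * U x) μ :=
    integrable_bdd μ _ (hPmeas.mul hU) 1 hPU_bd
  have hDPU_int : Integrable (fun x => Dind x * (P x * U x)) μ := by
    refine integrable_bdd μ _ (hDmeas.mul (hPmeas.mul hU)) 1 ?_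
    intro x
    rw [abs_mul]
    calc |Dind x| * |P x * U x| ≤ 1 * 1 := by
          refine mul_le_mul ?_ (hPU_bd x) (abs_nonneg _) zero_le_one
          rw [hDind]
          by_cases h : Function.Injective (fun i => cellF N (x i)) <;> simp [h]
      _ = 1 := mul_one 1
  -- sum of integrals identity
  have hsum : (∑ ω : Fin (N+1) → Fin (d+1),
      ∫ x in Set.univ.pi (fun i => S i ∩ (fun y => ω (cellF N y)) ⁻¹' {i}), U x ∂μ)
      = c^(N-d) * K := by
    rw [Finset.sum_congr rfl fun ω _ => hA ω]
    rw [← integral_finset_sum _ (fun ω _ => integrable_bdd μ _ (hFmeas ω) 1 (hFbd ω))]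
    rw [hK, ← integral_const_mul]
    congr 1
    funext x
    rw [← Finset.sum_mul, hpoint x]
    ring
  -- |∫_{pi S} U - K| ≤ μ(bad).toReal
  have hE : |(∫ x in Set.univ.pi S, U x ∂μ) - K| ≤ (μ (badSet d N)).toReal := by
    rw [setIntegral_pi_eq S hS U, hK, ← integral_sub hPU_int hDPU_int]
    have hptw : ∀ x, (P x * U x - Dind x * (P x * U x))
        = (badSet d N).indicator (fun _ => (1:ℝ)) x * (P x * U x) := by
      intro x
      by_cases h : Function.Injective (fun i => cellF N (x i))
      · rw [hDind]
        simp only [if_pos h]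
        rw [Set.indicator_of_notMem (by simp [badSet, h])]
        ring
      · rw [hDind]
        simp only [if_neg h]
        rw [Set.indicator_of_mem (by simp [badSet, h])]
        ring
    have habs : |∫ x, (P x * U x - Dind x * (P x * U x)) ∂μ|
        ≤ ∫ x, |P x * U x - Dind x * (P x * U x)| ∂μ := by
      rw [← Real.norm_eq_abs]
      refine (norm_integral_le_integral_norm _).trans (le_of_eq ?_)
      simp [Real.norm_eq_abs]
    calc |∫ x, (P x * U x - Dind x * (P x * U x)) ∂μ|
        ≤ ∫ x, |P x * U x - Dind x * (P x * U x)| ∂μ := habs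
      _ ≤ ∫ x, (badSet d N).indicator (fun _ => (1:ℝ)) x ∂μ := by
          refine integral_mono (hPU_int.sub hDPU_int).abs
            ((integrable_const (1:ℝ)).indicator (badSet_measurable d N)) ?_
          intro x
          show |P x * U x - Dind x * (P x * U x)| ≤ (badSet d N).indicator (fun _ => (1:ℝ)) x
          rw [hptw x, abs_mul]
          by_cases h : x ∈ badSet d N
          · rw [Set.indicator_of_mem h]
            simp only [abs_one, one_mul]
            exact hPU_bd x
          · rw [Set.indicator_of_notMem h]
            simp
      _ = (μ (badSet d N)).toReal := by
          rw [integral_indicator_const (1:ℝ) (badSet_measurable d N)]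
          simp
          rfl
  -- counting the total
  have hM0 : 0 ≤ M := le_trans (abs_nonneg _) (hM fun _ => 0)
  have hKbd : |K| ≤ c^(d+1) * M := by
    have h1 : c^(N-d) * |K| ≤ c^(N+1) * M := by
      rw [← abs_of_pos (pow_pos hc0 (N-d)), ← abs_mul, ← hsum]
      calc |∑ ω : Fin (N+1) → Fin (d+1), _| 
          ≤ ∑ ω : Fin (N+1) → Fin (d+1),
            |∫ x in Set.univ.pi (fun i => S i ∩ (fun y => ω (cellF N y)) ⁻¹' {i}), U x ∂μ| :=
            Finset.abs_sum_le_sum_abs _ _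
        _ ≤ ∑ _ω : Fin (N+1) → Fin (d+1), M := Finset.sum_le_sum fun ω _ => hM ω
        _ = c^(N+1) * M := by
            rw [Finset.sum_const, Finset.card_univ, Fintype.card_fun, nsmul_eq_mul]
            rw [Fintype.card_fin, Fintype.card_fin, hc]
            push_cast
            ring
    have hsplit : c^(N+1) = c^(N-d) * c^(d+1) := by
      rw [← pow_add]
      congr 1
      omega
    rw [hsplit] at h1
    have := (mul_le_mul_iff_right₀ (pow_pos hc0 (N-d))).mp (by linarith [h1] : c^(N-d) * |K| ≤ c^(N-d) * (c^(d+1) * M))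
    exact this
  calc |∫ x in Set.univ.pi S, U x ∂μ|
      ≤ |K| + |(∫ x in Set.univ.pi S, U x ∂μ) - K| := by
        have := abs_add_le K ((∫ x in Set.univ.pi S, U x ∂μ) - K)
        simpa using this
    _ ≤ c^(d+1) * M + (μ (badSet d N)).toReal := add_le_add hKbd hE

end AuxDisjoint

/-- Restricting the cut-norm supremum to pairwise disjoint
Borel sets loses at most a factor `(d+1)^{d+1}`. -/
theorem disjoint_sup_ge_cutNorm (d : ℕ) (hd : 1 ≤ d)
    (W₁ W₂ : (Fin (d + 1) → ℝ) → ℝ)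
    (hm₁ : Measurable W₁) (hm₂ : Measurable W₂)
    (hb₁ : ∀ x, W₁ x ∈ Set.Icc (0:ℝ) 1) (hb₂ : ∀ x, W₂ x ∈ Set.Icc (0:ℝ) 1)
    (hs₁ : ∀ (e : Equiv.Perm (Fin (d + 1))) (v : Fin (d + 1) → ℝ), W₁ (v ∘ e) = W₁ v)
    (hs₂ : ∀ (e : Equiv.Perm (Fin (d + 1))) (v : Fin (d + 1) → ℝ), W₂ (v ∘ e) = W₂ v) :
    (1 / ((d : ℝ) + 1) ^ (d + 1)) * cutNormD d (fun v => W₁ v - W₂ v) ≤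
      sSup { r | ∃ S : Fin (d + 1) → Set ℝ, (∀ i, MeasurableSet (S i)) ∧
        (∀ i j, i ≠ j → Disjoint (S i) (S j)) ∧
        r = |∫ x in Set.univ.pi S, (W₁ x - W₂ x) ∂(piUnif (Fin (d + 1)))| } := by
  classical
  set μ := piUnif (Fin (d+1)) with hμ
  set U : (Fin (d+1) → ℝ) → ℝ := fun v => W₁ v - W₂ v with hUdef
  have hUmeas : Measurable U := hm₁.sub hm₂
  have hUb : ∀ x, |U x| ≤ 1 := by
    intro x
    have h1 := hb₁ x
    have h2 := hb₂ x
    simp only [Set.mem_Icc] at h1 h2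
    simp only [hUdef]
    rw [abs_sub_le_iff]
    constructor <;> linarith [h1.1, h1.2, h2.1, h2.2]
  set c : ℝ := (d:ℝ)+1 with hc
  have hc0 : (0:ℝ) < c := by rw [hc]; positivity
  have hcp : (0:ℝ) < c^(d+1) := pow_pos hc0 _
  set R : Set ℝ := { r | ∃ S : Fin (d + 1) → Set ℝ, (∀ i, MeasurableSet (S i)) ∧
        (∀ i j, i ≠ j → Disjoint (S i) (S j)) ∧
        r = |∫ x in Set.univ.pi S, (W₁ x - W₂ x) ∂(piUnif (Fin (d + 1)))| } with hR
  have hRne : R.Nonempty := by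
    refine ⟨_, fun _ => (∅ : Set ℝ), fun i => MeasurableSet.empty,
      fun i j _ => disjoint_bot_left, rfl⟩
  have hRbdd : BddAbove R := by
    refine ⟨1, fun r hr => ?_⟩
    obtain ⟨S, hSm, _, rfl⟩ := hr
    have hfin : (μ.restrict (Set.univ.pi S)) Set.univ ≤ 1 := by
      rw [Measure.restrict_apply_univ]
      exact prob_le_one
    have := norm_integral_le_of_norm_le_const (μ := μ.restrict (Set.univ.pi S))
      (f := fun x => W₁ x - W₂ x) (C := 1)
      (Filter.Eventually.of_forall fun x => by
        rw [Real.norm_eq_abs]; exact hUb x)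
    rw [Real.norm_eq_abs] at this
    refine le_trans this ?_
    rw [one_mul]
    calc ((μ.restrict (Set.univ.pi S)) Set.univ).toReal ≤ (1 : ENNReal).toReal :=
          ENNReal.toReal_mono (by simp) hfin
      _ = 1 := by simp
  have hRsup0 : 0 ≤ sSup R := by
    obtain ⟨r, hr⟩ := hRne
    obtain ⟨S, _, _, rfl⟩ := hr
    exact le_trans (abs_nonneg _) (le_csSup hRbdd (by exact ⟨S, ‹_›, ‹_›, rfl⟩))
  -- every cut-norm candidate is bounded
  have hmain : ∀ S : Fin (d+1) → Set ℝ, (∀ i, MeasurableSet (S i)) →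
      |∫ x in Set.univ.pi S, U x ∂μ| ≤ c^(d+1) * sSup R := by
    intro S hS
    refine le_of_forall_pos_le_add fun ε hε => ?_
    obtain ⟨N, hN⟩ := exists_nat_gt (max ((d:ℝ)+1) (2*((d:ℝ)+1)^2/ε))
    have hNd : (d:ℝ)+1 < N := lt_of_le_of_lt (le_max_left _ _) hN
    have hNε : 2*((d:ℝ)+1)^2/ε < N := lt_of_le_of_lt (le_max_right _ _) hN
    have hNd' : d + 1 ≤ N := by exact_mod_cast hNd.le
    have hN1 : 1 ≤ N := le_trans (by omega) hNd'
    have hN0 : (0:ℝ) < N := by positivity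
    have hbad : (μ (badSet d N)).toReal ≤ ε := by
      have h1 := badSet_measure d N hN1
      have h2 : (μ (badSet d N)).toReal
          ≤ ((d:ℝ)+1)^2 * ((N:ℝ)+1) / (N:ℝ)^2 := by
        have := ENNReal.toReal_mono ENNReal.ofReal_ne_top h1
        rwa [ENNReal.toReal_ofReal (by positivity)] at this
      refine le_trans h2 ?_
      have hstep : ((d:ℝ)+1)^2 * ((N:ℝ)+1) / (N:ℝ)^2 ≤ 2*((d:ℝ)+1)^2 / N := by
        rw [div_le_div_iff₀ (by positivity) hN0]
        have hN1' : (1:ℝ) ≤ N := by exact_mod_cast hN1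
        have h2N : (N:ℝ)+1 ≤ 2*N := by linarith
        have hd2 : (0:ℝ) ≤ ((d:ℝ)+1)^2 := by positivity
        have hkey := mul_le_mul_of_nonneg_right
          (mul_le_mul_of_nonneg_left h2N hd2) hN0.le
        nlinarith [hkey]
      refine le_trans hstep ?_
      rw [div_le_iff₀ hN0]
      rw [div_lt_iff₀ hε] at hNε
      nlinarith [hNε]
    have hM : ∀ ω : Fin (N+1) → Fin (d+1),
        |∫ x in Set.univ.pi (fun i => S i ∩ (fun y => ω (cellF N y)) ⁻¹' {i}), U x ∂μ|
          ≤ sSup R := by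
      intro ω
      refine le_csSup hRbdd ?_
      refine ⟨fun i => S i ∩ (fun y => ω (cellF N y)) ⁻¹' {i}, ?_, ?_, rfl⟩
      · intro i
        exact (hS i).inter
          (((measurable_from_top (f := ω)).comp (measurable_cellF N)) (MeasurableSet.singleton i))
      · intro i j hij
        refine Set.disjoint_left.mpr ?_
        rintro y ⟨_, hyi⟩ ⟨_, hyj⟩
        rw [Set.mem_preimage, Set.mem_singleton_iff] at hyi hyj
        exact hij (hyi.symm.trans hyj)
    have := key d N hNd' U hUmeas hUb S hS (sSup R) hM
    calc |∫ x in Set.univ.pi S, U x ∂μ| ≤ c^(d+1) * sSup R + (μ (badSet d N)).toReal := this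
      _ ≤ c^(d+1) * sSup R + ε := by linarith
  -- conclude
  have hLle : cutNormD d (fun v => W₁ v - W₂ v) ≤ c^(d+1) * sSup R := by
    rw [cutNormD]
    refine csSup_le ⟨_, fun _ => (∅ : Set ℝ), fun i => MeasurableSet.empty, rfl⟩ ?_
    rintro r ⟨S, hS, rfl⟩
    exact hmain S hS
  rw [hc] at hLle hcp
  calc (1 / ((d:ℝ) + 1) ^ (d + 1)) * cutNormD d (fun v => W₁ v - W₂ v)
      ≤ (1 / ((d:ℝ) + 1) ^ (d + 1)) * (((d:ℝ)+1)^(d+1) * sSup R) := by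
        refine mul_le_mul_of_nonneg_left hLle (by positivity)
    _ = sSup R := by field_simp
    _ ≤ _ := le_of_eq rfl
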